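/- For fixed j ≥ 1 and each integer s ≥ 0, the normalized s-th moment E((X_{n,j}/n)^s) converges, as n → ∞, to binom(s - 1/(k+1), s) / binom(s + j - k/(k+1), s); i.e., X_{n,j}/n converges in moments (and in distribution) to a Beta(k/(k+1), j-1+2/(k+1)) distributed random variable. -/

import Mathlib

open Filter

/-- Generalized binomial coefficient `binom(x, n) = x(x-1)⋯(x-n+1)/n!`. -/
noncomputable def gbinom (x : ℝ) (n : ℕ) : ℝ :=
  (∏ i ∈ Finset.range n, (x - i)) / (Nat.factorial n)

/-- `P{X_{n,j} = m}`: the exact distribution of the number of descendants of node `j`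
in a random ordered increasing `k`-tree of size `n` (for `m ≥ 1`; zero if `m+j > n+1`). -/
noncomputable def Pdesc (k n j m : ℕ) : ℝ :=
  if m + j ≤ n + 1 then
    gbinom ((m : ℝ) - 1 - 1 / ((k : ℝ) + 1)) (m - 1)
      * gbinom ((n : ℝ) - m - 1 + 2 / ((k : ℝ) + 1)) (n - m - j + 1)
      / gbinom ((n : ℝ) - k / ((k : ℝ) + 1)) (n - j)
  else 0

open Finset

lemma gbinom_zero (x : ℝ) : gbinom x 0 = 1 := by simp [gbinom]

lemma fact_ne (n : ℕ) : (Nat.factorial n : ℝ) ≠ 0 := by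
  exact_mod_cast (Nat.factorial_pos n).ne'

lemma gbinom_succ_mul (x : ℝ) (n : ℕ) :
    ((n:ℝ)+1) * gbinom x (n+1) = x * gbinom (x-1) n := by
  unfold gbinom
  rw [Finset.prod_range_succ']
  rw [Finset.prod_congr rfl (fun i _ => by push_cast; ring :
    ∀ i ∈ range n, x - ((i+1 : ℕ):ℝ) = (x - 1) - (i:ℝ))]
  rw [Nat.factorial_succ]
  have h3 : (Nat.factorial n : ℝ) ≠ 0 := fact_ne n
  push_cast
  field_simp
  ring

lemma gbinom_absorb (x : ℝ) (t : ℕ) :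
    gbinom (x+1) t * (x+1-t) = gbinom x t * (x+1) := by
  unfold gbinom
  have h1 : (∏ i ∈ range t, (x+1-i)) * (x+1-t) = ∏ i ∈ range (t+1), (x+1-i) := by
    rw [Finset.prod_range_succ]
  have h2 : ∏ i ∈ range (t+1), (x+1-i) = (x+1) * ∏ i ∈ range t, (x-i) := by
    rw [Finset.prod_range_succ']
    rw [Finset.prod_congr rfl (fun i _ => by push_cast; ring :
      ∀ i ∈ range t, x+1 - ((i+1 : ℕ):ℝ) = x - (i:ℝ))]
    push_cast; ring
  field_simp
  rw [h1, h2]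

lemma gbinom_neg (x : ℝ) (t : ℕ) :
    gbinom x t = (-1)^t * gbinom ((t:ℝ)-1-x) t := by
  unfold gbinom
  have key : ∏ j ∈ range t, ((t:ℝ)-1-x - j) = (-1)^t * ∏ j ∈ range t, (x - j) := by
    have refl := Finset.prod_range_reflect (fun j => (t:ℝ)-1-x - j) t
    -- refl : ∏ j in range t, ((t:ℝ)-1-x - ((t-1-j:ℕ):ℝ)) = ∏ j in range t, ((t:ℝ)-1-x - j)
    rw [← refl]
    rw [Finset.prod_congr rfl (fun j hj => by
      have hj' : j < t := Finset.mem_range.mp hj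
      have : ((t - 1 - j : ℕ):ℝ) = (t:ℝ) - 1 - j := by
        have : t - 1 - j = t - (1+j) := by omega
        rw [this, Nat.cast_sub (by omega)]
        push_cast; ring
      rw [this]; ring_nf
      : ∀ j ∈ range t, (t:ℝ)-1-x - ((t - 1 - j : ℕ):ℝ) = -(x - (j:ℝ)))]
    rw [show (∏ j ∈ range t, -(x - (j:ℝ))) = ∏ j ∈ range t, ((-1) * (x - (j:ℝ))) by
      exact Finset.prod_congr rfl fun j _ => by ring]
    rw [Finset.prod_mul_distrib, Finset.prod_const, Finset.card_range]
  rw [key, mul_div_assoc, ← mul_assoc, ← pow_add, Even.neg_one_pow ⟨t, by ring⟩, one_mul]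

lemma gbinom_vandermonde (N : ℕ) : ∀ a b : ℝ,
    ∑ t ∈ range (N+1), gbinom a t * gbinom b (N-t) = gbinom (a+b) N := by
  induction N with
  | zero => intro a b; simp [gbinom_zero]
  | succ N ih =>
    intro a b
    have hN1 : ((N:ℝ)+1) ≠ 0 := by positivity
    have h1 : ∑ t ∈ range (N+1+1), (t:ℝ) * (gbinom a t * gbinom b (N+1-t))
        = a * gbinom (a-1+b) N := by
      rw [Finset.sum_range_succ']
      simp only [Nat.cast_zero, zero_mul, add_zero]
      rw [Finset.sum_congr rfl (fun u hu => by
        have e1 : N+1-(u+1) = N-u := by omega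
        have e2 : ((u:ℝ)+1) * gbinom a (u+1) = a * gbinom (a-1) u := gbinom_succ_mul a u
        rw [e1]
        push_cast
        rw [← mul_assoc, e2, mul_assoc]
        : ∀ u ∈ range (N+1), ((u+1:ℕ):ℝ) * (gbinom a (u+1) * gbinom b (N+1-(u+1)))
            = a * (gbinom (a-1) u * gbinom b (N-u)))]
      rw [← Finset.mul_sum, ih (a-1) b]
    have h2 : ∑ t ∈ range (N+1+1), ((N+1-t:ℕ):ℝ) * (gbinom a t * gbinom b (N+1-t))
        = b * gbinom (a+(b-1)) N := by
      rw [Finset.sum_range_succ]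
      have last0 : ((N+1-(N+1):ℕ):ℝ) * (gbinom a (N+1) * gbinom b (N+1-(N+1))) = 0 := by
        simp
      rw [last0, add_zero]
      rw [Finset.sum_congr rfl (fun t ht => by
        have ht' : t ≤ N := Nat.lt_succ_iff.mp (Finset.mem_range.mp ht)
        have e1 : N+1-t = (N-t)+1 := by omega
        have e2 : ((N+1-t:ℕ):ℝ) = ((N-t:ℕ):ℝ)+1 := by
          rw [Nat.cast_sub (by omega), Nat.cast_sub ht']
          push_cast; ring
        have e3 : (((N-t:ℕ):ℝ)+1) * gbinom b ((N-t)+1) = b * gbinom (b-1) (N-t) :=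
          gbinom_succ_mul b (N-t)
        rw [e1, Nat.cast_add, Nat.cast_one]
        calc (((N-t:ℕ):ℝ)+1) * (gbinom a t * gbinom b ((N-t)+1))
            = gbinom a t * ((((N-t:ℕ):ℝ)+1) * gbinom b ((N-t)+1)) := by ring
          _ = gbinom a t * (b * gbinom (b-1) (N-t)) := by rw [e3]
          _ = b * (gbinom a t * gbinom (b-1) (N-t)) := by ring
        : ∀ t ∈ range (N+1), ((N+1-t:ℕ):ℝ) * (gbinom a t * gbinom b (N+1-t))
            = b * (gbinom a t * gbinom (b-1) (N-t)))]
      rw [← Finset.mul_sum, ih a (b-1)]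
    have key : ((N:ℝ)+1) * ∑ t ∈ range (N+1+1), gbinom a t * gbinom b (N+1-t)
        = ((N:ℝ)+1) * gbinom (a+b) (N+1) := by
      rw [Finset.mul_sum]
      rw [Finset.sum_congr rfl (fun t ht => by
        have ht' : t ≤ N+1 := Nat.lt_succ_iff.mp (Finset.mem_range.mp ht)
        have e : ((N+1-t:ℕ):ℝ) = (N:ℝ)+1-t := by
          rw [Nat.cast_sub (by omega)]; push_cast; ring
        rw [e]; ring
        : ∀ t ∈ range (N+1+1), ((N:ℝ)+1) * (gbinom a t * gbinom b (N+1-t))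
            = (t:ℝ) * (gbinom a t * gbinom b (N+1-t))
              + ((N+1-t:ℕ):ℝ) * (gbinom a t * gbinom b (N+1-t)))]
      rw [Finset.sum_add_distrib, h1, h2, gbinom_succ_mul (a+b) N]
      have : a - 1 + b = a + b - 1 := by ring
      rw [this]
      have : a + (b-1) = a + b - 1 := by ring
      rw [this]
      ring
    exact mul_left_cancel₀ hN1 key

lemma gbinom_shift (x : ℝ) (t : ℕ) : ∀ s : ℕ,
    gbinom (x+s) t * ∏ i ∈ Finset.range s, (x+1+i-t)
      = gbinom x t * ∏ i ∈ Finset.range s, (x+1+i) := by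
  intro s
  induction s with
  | zero => simp
  | succ s ih =>
    rw [Finset.prod_range_succ, Finset.prod_range_succ]
    have e : x + ((s:ℕ)+1:ℕ) = (x+s) + 1 := by push_cast; ring
    rw [e]
    have habs := gbinom_absorb (x+s) t
    calc gbinom (x+s+1) t * ((∏ i ∈ range s, (x+1+i-t)) * (x+1+s-t))
        = (gbinom (x+s+1) t * (x+s+1-t)) * ∏ i ∈ range s, (x+1+i-t) := by ring
      _ = (gbinom (x+s) t * (x+s+1)) * ∏ i ∈ range s, (x+1+i-t) := by rw [habs]
      _ = (gbinom (x+s) t * ∏ i ∈ range s, (x+1+i-t)) * (x+s+1) := by ring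
      _ = (gbinom x t * ∏ i ∈ range s, (x+1+i)) * (x+s+1) := by rw [ih]
      _ = gbinom x t * ((∏ i ∈ range s, (x+1+i)) * (x+1+s)) := by ring

lemma gbinom_pos (x : ℝ) (t : ℕ) (h : ∀ i, i < t → (i:ℝ) < x) : 0 < gbinom x t := by
  unfold gbinom
  apply div_pos
  · apply Finset.prod_pos
    intro i hi
    have := h i (Finset.mem_range.mp hi)
    linarith
  · exact_mod_cast Nat.factorial_pos t


lemma moment_id (k j s n : ℕ) (hk : 1 ≤ k) (hj : 1 ≤ j) (hjn : j ≤ n) :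
    ∑ t ∈ Finset.range (n-j+1),
      (∏ i ∈ Finset.range s, ((t:ℝ)+1-(1/((k:ℝ)+1))+i))
        * (gbinom ((t:ℝ)-(1/((k:ℝ)+1))) t
            * gbinom ((n:ℝ)-(t:ℝ)-2+2*(1/((k:ℝ)+1))) ((n-j)-t)
            / gbinom ((n:ℝ)-1+(1/((k:ℝ)+1))) (n-j))
    = (∏ i ∈ Finset.range s, (1-(1/((k:ℝ)+1))+i))
        * (∏ i ∈ Finset.range s, ((n:ℝ)+(1/((k:ℝ)+1))+i))
      / (∏ i ∈ Finset.range s, ((j:ℝ)+(1/((k:ℝ)+1))+i)) := by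
  set α : ℝ := 1/((k:ℝ)+1) with hα
  set N : ℕ := n - j with hN
  have hk1 : (1:ℝ) < (k:ℝ)+1 := by
    have : (1:ℝ) ≤ (k:ℝ) := by exact_mod_cast hk
    linarith
  have hα0 : 0 < α := by rw [hα]; positivity
  have hα1 : α < 1 := by
    rw [hα]; rw [div_lt_one (by linarith)]; linarith
  have hNcast : ((N:ℕ):ℝ) = (n:ℝ) - (j:ℝ) := by
    rw [hN, Nat.cast_sub hjn]
  have hkk : (k:ℝ)/((k:ℝ)+1) = 1 - α := by
    rw [hα]; field_simp; ring
  -- absorb the rising-factorial product into the first gbinom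
  have habs : ∀ t ∈ Finset.range (N+1),
      (∏ i ∈ Finset.range s, ((t:ℝ)+1-α+i)) * gbinom ((t:ℝ)-α) t
        = gbinom ((t:ℝ)-α+s) t * ∏ i ∈ Finset.range s, (1-α+(i:ℝ)) := by
    intro t ht
    have h := gbinom_shift ((t:ℝ)-α) t s
    have eA : ∏ i ∈ Finset.range s, ((t:ℝ)-α+1+(i:ℝ)-(t:ℝ)) = ∏ i ∈ Finset.range s, (1-α+(i:ℝ)) :=
      Finset.prod_congr rfl (fun i _ => by ring)
    have eB : ∏ i ∈ Finset.range s, ((t:ℝ)-α+1+(i:ℝ)) = ∏ i ∈ Finset.range s, ((t:ℝ)+1-α+(i:ℝ)) :=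
      Finset.prod_congr rfl (fun i _ => by ring)
    rw [eA, eB] at h
    rw [mul_comm, ← h]
  -- key sum evaluation via Vandermonde
  have hkey : ∑ t ∈ Finset.range (N+1),
      gbinom ((t:ℝ)-α+s) t * gbinom ((n:ℝ)-(t:ℝ)-2+2*α) (N-t)
      = gbinom ((n:ℝ)-1+α+s) N := by
    have step : ∀ t ∈ Finset.range (N+1),
        gbinom ((t:ℝ)-α+s) t * gbinom ((n:ℝ)-(t:ℝ)-2+2*α) (N-t)
        = (-1:ℝ)^N * (gbinom (α-1-s) t * gbinom (1-(j:ℝ)-2*α) (N-t)) := by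
      intro t ht
      have ht' : t ≤ N := Nat.lt_succ_iff.mp (Finset.mem_range.mp ht)
      have n1 : gbinom ((t:ℝ)-α+s) t = (-1:ℝ)^t * gbinom (α-1-s) t := by
        rw [gbinom_neg ((t:ℝ)-α+s) t]
        congr 1
        congr 1
        ring
      have n2 : gbinom ((n:ℝ)-(t:ℝ)-2+2*α) (N-t)
          = (-1:ℝ)^(N-t) * gbinom (1-(j:ℝ)-2*α) (N-t) := by
        rw [gbinom_neg ((n:ℝ)-(t:ℝ)-2+2*α) (N-t)]
        congr 1
        congr 1
        rw [Nat.cast_sub ht', hNcast]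
        ring
      rw [n1, n2]
      have : (-1:ℝ)^t * (-1:ℝ)^(N-t) = (-1:ℝ)^N := by
        rw [← pow_add]
        congr 1
        omega
      calc (-1:ℝ)^t * gbinom (α-1-s) t * ((-1:ℝ)^(N-t) * gbinom (1-(j:ℝ)-2*α) (N-t))
          = ((-1:ℝ)^t * (-1:ℝ)^(N-t)) * (gbinom (α-1-s) t * gbinom (1-(j:ℝ)-2*α) (N-t)) := by
            ring
        _ = (-1:ℝ)^N * (gbinom (α-1-s) t * gbinom (1-(j:ℝ)-2*α) (N-t)) := by rw [this]
    rw [Finset.sum_congr rfl step, ← Finset.mul_sum, gbinom_vandermonde N (α-1-s) (1-(j:ℝ)-2*α)]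
    have e : α-1-(s:ℝ)+(1-(j:ℝ)-2*α) = -(s:ℝ)-(j:ℝ)-α := by ring
    rw [e, gbinom_neg (-(s:ℝ)-(j:ℝ)-α) N, ← mul_assoc, ← pow_add,
      Even.neg_one_pow ⟨N, by ring⟩, one_mul]
    congr 1
    rw [hNcast]
    ring
  -- denominator ratio
  have hDpos : 0 < gbinom ((n:ℝ)-1+α) N := by
    apply gbinom_pos
    intro i hi
    have : (i:ℝ) < (N:ℝ) := by exact_mod_cast hi
    rw [hNcast] at this
    have : (i:ℝ) < (n:ℝ) - 1 := by
      have hj1 : (1:ℝ) ≤ (j:ℝ) := by exact_mod_cast hj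
      linarith
    linarith
  have hprodj : ∀ i ∈ Finset.range s, (0:ℝ) < (j:ℝ)+α+(i:ℝ) := by
    intro i _
    have hj1 : (1:ℝ) ≤ (j:ℝ) := by exact_mod_cast hj
    positivity
  have hprodjpos : (0:ℝ) < ∏ i ∈ Finset.range s, ((j:ℝ)+α+(i:ℝ)) :=
    Finset.prod_pos hprodj
  have hratio : gbinom ((n:ℝ)-1+α+s) N
      = gbinom ((n:ℝ)-1+α) N * (∏ i ∈ Finset.range s, ((n:ℝ)+α+(i:ℝ)))
        / (∏ i ∈ Finset.range s, ((j:ℝ)+α+(i:ℝ))) := by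
    have h := gbinom_shift ((n:ℝ)-1+α) N s
    have eA : ∏ i ∈ Finset.range s, ((n:ℝ)-1+α+1+(i:ℝ)-(N:ℝ)) = ∏ i ∈ Finset.range s, ((j:ℝ)+α+(i:ℝ)) :=
      Finset.prod_congr rfl (fun i _ => by rw [hNcast]; ring)
    have eB : ∏ i ∈ Finset.range s, ((n:ℝ)-1+α+1+(i:ℝ)) = ∏ i ∈ Finset.range s, ((n:ℝ)+α+(i:ℝ)) :=
      Finset.prod_congr rfl (fun i _ => by ring)
    rw [eA, eB] at h
    field_simp
    linarith [h]
  -- put it together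
  calc ∑ t ∈ Finset.range (N+1),
        (∏ i ∈ Finset.range s, ((t:ℝ)+1-α+i))
          * (gbinom ((t:ℝ)-α) t * gbinom ((n:ℝ)-(t:ℝ)-2+2*α) (N-t)
              / gbinom ((n:ℝ)-1+α) N)
      = (∑ t ∈ Finset.range (N+1),
          gbinom ((t:ℝ)-α+s) t * gbinom ((n:ℝ)-(t:ℝ)-2+2*α) (N-t))
          * (∏ i ∈ Finset.range s, (1-α+(i:ℝ))) / gbinom ((n:ℝ)-1+α) N := by
        rw [Finset.sum_mul, Finset.sum_div]
        refine Finset.sum_congr rfl (fun t ht => ?_)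
        have h := habs t ht
        calc (∏ i ∈ Finset.range s, ((t:ℝ)+1-α+i))
              * (gbinom ((t:ℝ)-α) t * gbinom ((n:ℝ)-(t:ℝ)-2+2*α) (N-t)
                  / gbinom ((n:ℝ)-1+α) N)
            = ((∏ i ∈ Finset.range s, ((t:ℝ)+1-α+i)) * gbinom ((t:ℝ)-α) t)
                * gbinom ((n:ℝ)-(t:ℝ)-2+2*α) (N-t) / gbinom ((n:ℝ)-1+α) N := by
              ring
          _ = (gbinom ((t:ℝ)-α+s) t * ∏ i ∈ Finset.range s, (1-α+(i:ℝ)))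
                * gbinom ((n:ℝ)-(t:ℝ)-2+2*α) (N-t) / gbinom ((n:ℝ)-1+α) N := by rw [h]
          _ = gbinom ((t:ℝ)-α+s) t * gbinom ((n:ℝ)-(t:ℝ)-2+2*α) (N-t)
                * (∏ i ∈ Finset.range s, (1-α+(i:ℝ))) / gbinom ((n:ℝ)-1+α) N := by
              ring
    _ = (∏ i ∈ Finset.range s, (1-α+(i:ℝ)))
          * (∏ i ∈ Finset.range s, ((n:ℝ)+α+(i:ℝ)))
        / (∏ i ∈ Finset.range s, ((j:ℝ)+α+(i:ℝ))) := by
        rw [hkey, hratio]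
        field_simp

lemma telescope_prod (N : ℕ) :
    ∏ i ∈ Finset.range N, (((i:ℝ)+1)/((i:ℝ)+2)) = 1/((N:ℝ)+1) := by
  induction N with
  | zero => simp
  | succ N ih =>
    rw [Finset.prod_range_succ, ih]
    push_cast
    have h1 : ((N:ℝ)+1) ≠ 0 := by positivity
    have h2 : ((N:ℝ)+2) ≠ 0 := by positivity
    field_simp
    ring

lemma ratio_pow_le (k : ℕ) (hk : 1 ≤ k) (u : ℝ) (hu : 1 ≤ u) :
    ((u - 1/((k:ℝ)+1))/(u + 1/((k:ℝ)+1)))^(k+1) ≤ u/(u+1) := by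
  set α : ℝ := 1/((k:ℝ)+1) with hα
  have hk0 : (0:ℝ) < (k:ℝ)+1 := by positivity
  have hα0 : 0 < α := by rw [hα]; positivity
  have hα1 : α < 1 := by
    rw [hα, div_lt_one hk0]
    have : (1:ℝ) ≤ (k:ℝ) := by exact_mod_cast hk
    linarith
  have hαk : ((k:ℝ)+1) * α = 1 := by rw [hα]; field_simp
  set x : ℝ := 2*α/(u+α) with hx
  have hden : 0 < u + α := by linarith
  have hx0 : 0 < x := by rw [hx]; positivity
  have hx1 : x ≤ 1 := by
    rw [hx, div_le_one hden]; linarith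
  have hrw : (u - α)/(u + α) = 1 - x := by
    rw [hx]; field_simp; ring
  rw [hrw]
  have h1x : (0:ℝ) ≤ 1 - x := by linarith
  -- (1-x)^(k+1) ≤ (1/(1+x))^(k+1)
  have step1 : (1-x)^(k+1) ≤ (1/(1+x))^(k+1) := by
    apply pow_le_pow_left₀ h1x
    rw [le_div_iff₀ (by linarith)]
    nlinarith
  -- (1/(1+x))^(k+1) ≤ 1/(1+(k+1)x)
  have bern : 1 + ((k:ℝ)+1)*x ≤ (1+x)^(k+1) := by
    have := one_add_mul_le_pow (a := x) (by linarith) (k+1)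
    push_cast at this ⊢
    linarith
  have step2 : (1/(1+x))^(k+1) ≤ 1/(1+((k:ℝ)+1)*x) := by
    rw [div_pow, one_pow]
    apply one_div_le_one_div_of_le
    · nlinarith
    · exact bern
  -- 1/(1+(k+1)x) = (u+α)/(u+α+2) ≤ u/(u+1)
  have hkx : ((k:ℝ)+1)*x = 2/(u+α) := by
    rw [hx]
    field_simp
    nlinarith [hαk]
  have step3 : 1/(1+((k:ℝ)+1)*x) ≤ u/(u+1) := by
    rw [hkx]
    rw [div_le_div_iff₀ (by positivity) (by linarith)]
    have e : (1 + 2/(u+α)) = (u+α+2)/(u+α) := by field_simp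
    rw [e]
    have huu : u * ((u+α+2)/(u+α)) = u*(u+α+2)/(u+α) := by ring
    rw [huu, le_div_iff₀ hden]
    nlinarith
  calc (1-x)^(k+1) ≤ (1/(1+x))^(k+1) := step1
    _ ≤ 1/(1+((k:ℝ)+1)*x) := step2
    _ ≤ u/(u+1) := step3

lemma Q_tendsto (k : ℕ) (hk : 1 ≤ k) :
    Tendsto (fun N : ℕ => ∏ i ∈ Finset.range N,
      (((i:ℝ)+1-1/((k:ℝ)+1))/((i:ℝ)+1+1/((k:ℝ)+1)))) atTop (nhds 0) := by
  set α : ℝ := 1/((k:ℝ)+1) with hα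
  have hk0 : (0:ℝ) < (k:ℝ)+1 := by positivity
  have hα0 : 0 < α := by rw [hα]; positivity
  have hα1 : α < 1 := by
    rw [hα, div_lt_one hk0]
    have : (1:ℝ) ≤ (k:ℝ) := by exact_mod_cast hk
    linarith
  set Q : ℕ → ℝ := fun N => ∏ i ∈ Finset.range N, (((i:ℝ)+1-α)/((i:ℝ)+1+α)) with hQ
  have hfac0 : ∀ i : ℕ, (0:ℝ) ≤ ((i:ℝ)+1-α)/((i:ℝ)+1+α) := by
    intro i
    apply div_nonneg
    · have : (0:ℝ) ≤ (i:ℝ) := Nat.cast_nonneg i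
      linarith
    · have : (0:ℝ) ≤ (i:ℝ) := Nat.cast_nonneg i
      linarith
  have hfac1 : ∀ i : ℕ, ((i:ℝ)+1-α)/((i:ℝ)+1+α) ≤ 1 := by
    intro i
    have hd : (0:ℝ) < (i:ℝ)+1+α := by positivity
    rw [div_le_one hd]
    linarith
  have hQ0 : ∀ N, 0 ≤ Q N := fun N => Finset.prod_nonneg (fun i _ => hfac0 i)
  have hanti : Antitone Q := by
    apply antitone_nat_of_succ_le
    intro N
    have h1 : Q (N+1) = Q N * (((N:ℝ)+1-α)/((N:ℝ)+1+α)) := Finset.prod_range_succ _ _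
    rw [h1]
    nlinarith [hQ0 N, hfac1 N, hfac0 N]
  have hbdd : BddBelow (Set.range Q) := ⟨0, fun x ⟨N, hN⟩ => hN ▸ hQ0 N⟩
  have hconv : Tendsto Q atTop (nhds (⨅ N, Q N)) := tendsto_atTop_ciInf hanti hbdd
  have hpow_le : ∀ N, Q N ^ (k+1) ≤ 1/((N:ℝ)+1) := by
    intro N
    rw [← telescope_prod N]
    rw [← Finset.prod_pow]
    apply Finset.prod_le_prod
    · intro i _
      exact pow_nonneg (hfac0 i) _
    · intro i _
      have := ratio_pow_le k hk ((i:ℝ)+1) (by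
        have : (0:ℝ) ≤ (i:ℝ) := Nat.cast_nonneg i
        linarith)
      calc (((i:ℝ)+1-α)/((i:ℝ)+1+α))^(k+1)
          = ((((i:ℝ)+1) - α)/(((i:ℝ)+1) + α))^(k+1) := rfl
        _ ≤ ((i:ℝ)+1)/(((i:ℝ)+1)+1) := this
        _ = ((i:ℝ)+1)/((i:ℝ)+2) := by ring_nf
  have hpow0 : Tendsto (fun N => Q N ^ (k+1)) atTop (nhds 0) := by
    apply squeeze_zero (fun N => pow_nonneg (hQ0 N) _) hpow_le
    have : Tendsto (fun N : ℕ => ((N:ℝ)+1)) atTop atTop := by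
      apply Filter.tendsto_atTop_add_const_right
      exact tendsto_natCast_atTop_atTop
    exact this.inv_tendsto_atTop.congr (fun N => (one_div _).symm)
  have hpowlim : Tendsto (fun N => Q N ^ (k+1)) atTop (nhds ((⨅ N, Q N)^(k+1))) :=
    hconv.pow _
  have hinf : (⨅ N, Q N)^(k+1) = 0 := tendsto_nhds_unique hpowlim hpow0
  have hinf0 : (⨅ N, Q N) = 0 := by
    exact pow_eq_zero_iff (Nat.succ_ne_zero k) |>.mp hinf
  rw [hinf0] at hconv
  exact hconv

lemma pow_sub_pow_le_aux (a b M : ℝ) (s : ℕ) (hb : 0 ≤ b) (hba : b ≤ a) (haM : a ≤ M) :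
    a^s - b^s ≤ (a-b) * (s * M^(s-1)) := by
  have hM : 0 ≤ M := le_trans hb (le_trans hba haM)
  have key := geom_sum₂_mul a b s
  rw [← key]
  have hsum : ∑ i ∈ Finset.range s, a^i * b^(s-1-i) ≤ (s:ℝ) * M^(s-1) := by
    calc ∑ i ∈ Finset.range s, a^i * b^(s-1-i)
        ≤ ∑ i ∈ Finset.range s, M^(s-1) := by
          apply Finset.sum_le_sum
          intro i hi
          have hi' : i < s := Finset.mem_range.mp hi
          have e : i + (s-1-i) = s-1 := by omega
          calc a^i * b^(s-1-i) ≤ M^i * M^(s-1-i) := by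
                apply mul_le_mul
                · exact pow_le_pow_left₀ (le_trans hb hba) haM i
                · exact pow_le_pow_left₀ hb (le_trans hba haM) _
                · exact pow_nonneg hb _
                · exact pow_nonneg hM _
            _ = M^(s-1) := by rw [← pow_add, e]
      _ = (s:ℝ) * M^(s-1) := by rw [Finset.sum_const, Finset.card_range, nsmul_eq_mul]
  calc (∑ i ∈ Finset.range s, a^i * b^(s-1-i)) * (a - b)
      ≤ ((s:ℝ) * M^(s-1)) * (a - b) := by
        apply mul_le_mul_of_nonneg_right hsum (by linarith)
    _ = (a-b) * ((s:ℝ) * M^(s-1)) := by ring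

/-- per-term bound: `|(t+1)^s - ∏ (t+1-α+i)| ≤ (s+1)*s*(n+1+s)^(s-1)` for `t ≤ n-1`. -/
lemma term_bound (α : ℝ) (hα0 : 0 < α) (hα1 : α < 1) (s t n : ℕ) (htn : (t:ℝ) + 1 ≤ (n:ℝ)) :
    |((t:ℝ)+1)^s - ∏ i ∈ Finset.range s, ((t:ℝ)+1-α+i)| ≤ ((s:ℝ)+1) * ((s:ℝ) * ((n:ℝ)+1+s)^(s-1)) := by
  set R := ∏ i ∈ Finset.range s, ((t:ℝ)+1-α+i) with hR
  have ht0 : (0:ℝ) ≤ (t:ℝ) := Nat.cast_nonneg t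
  have hlow : (t:ℝ)^s ≤ R := by
    rw [hR]
    calc (t:ℝ)^s = ∏ _i ∈ Finset.range s, (t:ℝ) := by
          rw [Finset.prod_const, Finset.card_range]
      _ ≤ ∏ i ∈ Finset.range s, ((t:ℝ)+1-α+i) := by
          apply Finset.prod_le_prod (fun i _ => ht0)
          intro i hi
          have : (0:ℝ) ≤ (i:ℝ) := Nat.cast_nonneg i
          linarith
  have hhigh : R ≤ ((t:ℝ)+1+s)^s := by
    rw [hR]
    calc ∏ i ∈ Finset.range s, ((t:ℝ)+1-α+i)
        ≤ ∏ _i ∈ Finset.range s, ((t:ℝ)+1+s) := by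
          apply Finset.prod_le_prod
          · intro i hi
            have : (0:ℝ) ≤ (i:ℝ) := Nat.cast_nonneg i
            linarith
          · intro i hi
            have hi' : i < s := Finset.mem_range.mp hi
            have : (i:ℝ) ≤ (s:ℝ) - 1 := by
              have : (i:ℝ) + 1 ≤ (s:ℝ) := by exact_mod_cast hi'
              linarith
            linarith
      _ = ((t:ℝ)+1+s)^s := by rw [Finset.prod_const, Finset.card_range]
  have hmid_low : (t:ℝ)^s ≤ ((t:ℝ)+1)^s := pow_le_pow_left₀ ht0 (by linarith) s
  have hmid_high : ((t:ℝ)+1)^s ≤ ((t:ℝ)+1+s)^s :=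
    pow_le_pow_left₀ (by linarith) (by
      have : (0:ℝ) ≤ (s:ℝ) := Nat.cast_nonneg s
      linarith) s
  have hdiff : ((t:ℝ)+1+s)^s - (t:ℝ)^s ≤ ((s:ℝ)+1) * ((s:ℝ) * ((n:ℝ)+1+s)^(s-1)) := by
    have := pow_sub_pow_le_aux ((t:ℝ)+1+s) (t:ℝ) ((n:ℝ)+1+s) s ht0
      (by
        have : (0:ℝ) ≤ (s:ℝ) := Nat.cast_nonneg s
        linarith)
      (by linarith)
    calc ((t:ℝ)+1+s)^s - (t:ℝ)^s ≤ (((t:ℝ)+1+s) - t) * ((s:ℝ) * ((n:ℝ)+1+s)^(s-1)) := this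
      _ = ((s:ℝ)+1) * ((s:ℝ) * ((n:ℝ)+1+s)^(s-1)) := by ring
  rw [abs_sub_le_iff]
  constructor <;> linarith

lemma ratio_tendsto_one (c : ℝ) :
    Tendsto (fun n : ℕ => ((n:ℝ)+c)/(n:ℝ)) atTop (nhds 1) := by
  have h0 : Tendsto (fun n : ℕ => c/(n:ℝ)) atTop (nhds 0) :=
    Tendsto.div_atTop tendsto_const_nhds tendsto_natCast_atTop_atTop
  have h1 : Tendsto (fun n : ℕ => 1 + c/(n:ℝ)) atTop (nhds 1) := by
    simpa using tendsto_const_nhds.add h0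
  apply h1.congr'
  filter_upwards [eventually_ge_atTop 1] with n hn
  have hn' : (n:ℝ) ≠ 0 := by
    have : (1:ℝ) ≤ (n:ℝ) := by exact_mod_cast hn
    linarith
  field_simp

lemma prod_ratio_tendsto (α : ℝ) (s : ℕ) :
    Tendsto (fun n : ℕ => ∏ i ∈ Finset.range s, (((n:ℝ)+(α+i))/(n:ℝ))) atTop (nhds 1) := by
  have := tendsto_finset_prod (f := fun (i : ℕ) (n : ℕ) => ((n:ℝ)+(α+(i:ℝ)))/(n:ℝ))
    (a := fun _ => (1:ℝ)) (Finset.range s)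
    (fun i _ => ratio_tendsto_one (α+(i:ℝ)))
  simpa using this

lemma bound_tendsto (s : ℕ) :
    Tendsto (fun n : ℕ => ((s:ℝ)+1) * ((s:ℝ) * ((n:ℝ)+1+s)^(s-1)) / (n:ℝ)^s)
      atTop (nhds 0) := by
  rcases Nat.eq_zero_or_pos s with hs | hs
  · subst hs
    simpa using (tendsto_const_nhds : Tendsto (fun _ : ℕ => (0:ℝ)) atTop (nhds 0))
  · obtain ⟨r, rfl⟩ : ∃ r, s = r+1 := ⟨s-1, by omega⟩
    have hpow : Tendsto (fun n : ℕ => (((n:ℝ)+(1+((r:ℝ)+1)))/(n:ℝ))^r) atTop (nhds 1) := by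
      simpa using (ratio_tendsto_one (1+((r:ℝ)+1))).pow r
    have hinv : Tendsto (fun n : ℕ => ((n:ℝ))⁻¹) atTop (nhds 0) :=
      tendsto_inv_atTop_zero.comp tendsto_natCast_atTop_atTop
    have hmul : Tendsto (fun n : ℕ =>
        (((r:ℝ)+1)+1) * (((r:ℝ)+1) * ((((n:ℝ)+(1+((r:ℝ)+1)))/(n:ℝ))^r * ((n:ℝ))⁻¹)))
        atTop (nhds ((((r:ℝ)+1)+1) * (((r:ℝ)+1) * (1 * 0)))) := by
      exact tendsto_const_nhds.mul (tendsto_const_nhds.mul (hpow.mul hinv))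
    simp only [mul_zero, one_mul] at hmul
    apply hmul.congr'
    filter_upwards [eventually_ge_atTop 1] with n hn
    have hn0 : (0:ℝ) < (n:ℝ) := by exact_mod_cast hn
    have e1 : (r+1) - 1 = r := by omega
    rw [e1]
    push_cast
    rw [div_pow]
    field_simp
    ring

lemma gbinom_one (x : ℝ) : gbinom x 1 = x := by
  simp [gbinom]

/-- For fixed `j ≥ 1`, the `s`-th moment of `X_{n,j}/n` converges to
`binom(s-1/(k+1), s)/binom(s+j-k/(k+1), s)`, i.e. `X_{n,j}/n` converges in moments to a
`Beta(k/(k+1), j-1+2/(k+1))` random variable. -/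
theorem ktree_descendants_moments (k j : ℕ) (hk : 1 ≤ k) (hj : 1 ≤ j) (s : ℕ) :
    Tendsto (fun n : ℕ => ∑' m : ℕ, (((m : ℝ) + 1) / (n : ℝ)) ^ s * Pdesc k n j (m + 1))
      atTop
      (nhds (gbinom ((s : ℝ) - 1 / ((k : ℝ) + 1)) s
        / gbinom ((s : ℝ) + j - k / ((k : ℝ) + 1)) s)) := by
  have hk1 : (1:ℝ) ≤ (k:ℝ) := by exact_mod_cast hk
  have hj1 : (1:ℝ) ≤ (j:ℝ) := by exact_mod_cast hj
  set α : ℝ := 1/((k:ℝ)+1) with hα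
  have hα0 : 0 < α := by rw [hα]; positivity
  have hα1 : α < 1 := by rw [hα, div_lt_one (by linarith)]; linarith
  have hkk : (k:ℝ)/((k:ℝ)+1) = 1 - α := by rw [hα]; field_simp; ring
  have h2α : (2:ℝ)/((k:ℝ)+1) = 2*α := by rw [hα]; ring
  set c : ℝ := ∏ i ∈ Finset.range s, (1-α+(i:ℝ)) with hc
  set Dj : ℝ := ∏ i ∈ Finset.range s, ((j:ℝ)+α+(i:ℝ)) with hDj
  have hDjpos : 0 < Dj := Finset.prod_pos (fun i _ => by positivity)
  -- identify the target constant
  have hT : gbinom ((s:ℝ) - α) s / gbinom ((s:ℝ)+(j:ℝ)-(k:ℝ)/((k:ℝ)+1)) s = c / Dj := by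
    have hnum : ∏ i ∈ Finset.range s, ((s:ℝ) - α - (i:ℝ)) = c := by
      rw [hc, ← Finset.prod_range_reflect (fun i => 1-α+(i:ℝ)) s]
      apply Finset.prod_congr rfl
      intro i hi
      have hi' : i < s := Finset.mem_range.mp hi
      have e : ((s-1-i:ℕ):ℝ) = (s:ℝ)-1-(i:ℝ) := by
        rw [Nat.cast_sub (by omega), Nat.cast_sub (by omega)]
        push_cast; ring
      simp only [e]
      ring
    have hden : ∏ i ∈ Finset.range s, ((s:ℝ)+(j:ℝ)-(k:ℝ)/((k:ℝ)+1) - (i:ℝ)) = Dj := by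
      rw [hDj, ← Finset.prod_range_reflect (fun i => (j:ℝ)+α+(i:ℝ)) s]
      apply Finset.prod_congr rfl
      intro i hi
      have hi' : i < s := Finset.mem_range.mp hi
      have e : ((s-1-i:ℕ):ℝ) = (s:ℝ)-1-(i:ℝ) := by
        rw [Nat.cast_sub (by omega), Nat.cast_sub (by omega)]
        push_cast; ring
      simp only [e]
      rw [hkk]
      ring
    unfold gbinom
    rw [hnum, hden]
    have hf : (Nat.factorial s : ℝ) ≠ 0 := fact_ne s
    field_simp
  rw [hT]
  -- the corrected probability
  set P : ℕ → ℕ → ℝ := fun n t =>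
    gbinom ((t:ℝ)-α) t * gbinom ((n:ℝ)-(t:ℝ)-2+2*α) ((n-j)-t)
      / gbinom ((n:ℝ)-1+α) (n-j) with hP
  -- positivity
  have hPpos : ∀ n, j ≤ n → ∀ t, t ≤ n-j → 0 < P n t := by
    intro n hn t ht
    simp only [hP]
    have g1 : 0 < gbinom ((t:ℝ)-α) t := by
      apply gbinom_pos
      intro i hi
      have : (i:ℝ)+1 ≤ (t:ℝ) := by exact_mod_cast hi
      linarith
    have g2 : 0 < gbinom ((n:ℝ)-(t:ℝ)-2+2*α) ((n-j)-t) := by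
      apply gbinom_pos
      intro i hi
      have h2 : i + t + j + 1 ≤ n := by omega
      have : (i:ℝ)+(t:ℝ)+(j:ℝ)+1 ≤ (n:ℝ) := by exact_mod_cast h2
      linarith
    have g3 : 0 < gbinom ((n:ℝ)-1+α) (n-j) := by
      apply gbinom_pos
      intro i hi
      have h2 : i + j + 1 ≤ n := by omega
      have : (i:ℝ)+(j:ℝ)+1 ≤ (n:ℝ) := by exact_mod_cast h2
      linarith
    exact div_pos (mul_pos g1 g2) g3
  -- moment identities
  have hm : ∀ n, j ≤ n → ∀ s' : ℕ, ∑ t ∈ Finset.range (n-j+1),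
      (∏ i ∈ Finset.range s', ((t:ℝ)+1-α+i)) * P n t
      = (∏ i ∈ Finset.range s', (1-α+(i:ℝ)))
          * (∏ i ∈ Finset.range s', ((n:ℝ)+α+(i:ℝ)))
        / (∏ i ∈ Finset.range s', ((j:ℝ)+α+(i:ℝ))) := by
    intro n hn s'
    simp only [hP, hα]
    exact moment_id k j s' n hk hj hn
  have hm0 : ∀ n, j ≤ n → ∑ t ∈ Finset.range (n-j+1), P n t = 1 := by
    intro n hn
    have := hm n hn 0
    simpa using this
  have hmS : ∀ n, j ≤ n → ∑ t ∈ Finset.range (n-j+1),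
      (∏ i ∈ Finset.range s, ((t:ℝ)+1-α+i)) * P n t
      = c * (∏ i ∈ Finset.range s, ((n:ℝ)+α+(i:ℝ))) / Dj := fun n hn => hm n hn s
  -- decomposition of the tsum
  set S : ℕ → ℝ := fun n =>
    ∑ t ∈ Finset.range (n-j+1), (((t:ℝ)+1)/(n:ℝ))^s * P n t with hS
  set X : ℕ → ℝ := fun n =>
    ((((n-j:ℕ):ℝ)+1)/(n:ℝ))^s * P n (n-j) * ((j:ℝ)-3+2*α) with hX
  have hFeq : ∀ n, j ≤ n →
      (∑' m : ℕ, (((m:ℝ)+1)/(n:ℝ))^s * Pdesc k n j (m+1)) = S n + X n := by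
    intro n hn
    have h1 : (∑' m : ℕ, (((m:ℝ)+1)/(n:ℝ))^s * Pdesc k n j (m+1))
        = ∑ t ∈ Finset.range (n-j+1), (((t:ℝ)+1)/(n:ℝ))^s * Pdesc k n j (t+1) := by
      apply tsum_eq_sum
      intro m hm'
      have hm2 : n-j+1 ≤ m := by
        by_contra h
        exact hm' (Finset.mem_range.mpr (by omega))
      have hcond : ¬ ((m+1) + j ≤ n + 1) := by omega
      unfold Pdesc
      rw [if_neg hcond, mul_zero]
    have hterm : ∀ t ∈ Finset.range (n-j), Pdesc k n j (t+1) = P n t := by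
      intro t ht
      have ht' : t < n-j := Finset.mem_range.mp ht
      have hcond : (t+1) + j ≤ n+1 := by omega
      unfold Pdesc
      rw [if_pos hcond]
      have e1 : (t+1) - 1 = t := by omega
      have e2 : n - (t+1) - j + 1 = (n-j) - t := by omega
      rw [e1, e2, ← hα, h2α]
      have e4 : ((t+1:ℕ):ℝ) - 1 - α = (t:ℝ) - α := by push_cast; ring
      have e5 : (n:ℝ) - ((t+1:ℕ):ℝ) - 1 + 2*α = (n:ℝ)-(t:ℝ)-2+2*α := by push_cast; ring
      have e6 : (n:ℝ) - (k:ℝ)/((k:ℝ)+1) = (n:ℝ)-1+α := by rw [hkk]; ring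
      rw [e4, e5, e6]
    have hlast : Pdesc k n j ((n-j)+1) = P n (n-j) * ((j:ℝ)-2+2*α) := by
      have hcond : ((n-j)+1) + j ≤ n+1 := by omega
      unfold Pdesc
      rw [if_pos hcond]
      have e1 : ((n-j)+1) - 1 = n-j := by omega
      have e2 : n - ((n-j)+1) - j + 1 = 1 := by omega
      rw [e1, e2, ← hα, h2α]
      have ecast : (((n-j)+1:ℕ):ℝ) = ((n-j:ℕ):ℝ) + 1 := by push_cast; ring
      have ecast2 : ((n-j:ℕ):ℝ) = (n:ℝ)-(j:ℝ) := by
        rw [Nat.cast_sub hn]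
      have e4 : (((n-j)+1:ℕ):ℝ) - 1 - α = ((n-j:ℕ):ℝ) - α := by rw [ecast]; ring
      have e5 : (n:ℝ) - (((n-j)+1:ℕ):ℝ) - 1 + 2*α = (j:ℝ)-2+2*α := by
        rw [ecast, ecast2]; ring
      have e6 : (n:ℝ) - (k:ℝ)/((k:ℝ)+1) = (n:ℝ)-1+α := by rw [hkk]; ring
      rw [e4, e5, e6, gbinom_one]
      simp only [hP, Nat.sub_self, gbinom_zero, mul_one]
      ring
    rw [h1, Finset.sum_range_succ]
    rw [Finset.sum_congr rfl (fun t ht => by rw [hterm t ht])]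
    have hSsplit : S n = (∑ t ∈ Finset.range (n-j), (((t:ℝ)+1)/(n:ℝ))^s * P n t)
        + ((((n-j:ℕ):ℝ)+1)/(n:ℝ))^s * P n (n-j) := by
      simp only [hS]
      rw [Finset.sum_range_succ]
    rw [hlast, hSsplit]
    simp only [hX]
    ring
  -- the main sum S tends to c/Dj
  set G : ℕ → ℝ := fun n =>
    c * (∏ i ∈ Finset.range s, ((n:ℝ)+α+(i:ℝ))) / (Dj * (n:ℝ)^s) with hG
  have hSG : ∀ n, j ≤ n →
      |S n - G n| ≤ ((s:ℝ)+1) * ((s:ℝ) * ((n:ℝ)+1+s)^(s-1)) / (n:ℝ)^s := by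
    intro n hn
    have hn1 : 1 ≤ n := le_trans hj hn
    have hnR : (0:ℝ) < (n:ℝ) := by exact_mod_cast hn1
    have hns : (0:ℝ) < (n:ℝ)^s := by positivity
    have hG' : G n = (∑ t ∈ Finset.range (n-j+1),
        (∏ i ∈ Finset.range s, ((t:ℝ)+1-α+i)) * P n t) / (n:ℝ)^s := by
      simp only [hG]
      rw [hmS n hn, div_div]
    have hS'' : S n = (∑ t ∈ Finset.range (n-j+1), ((t:ℝ)+1)^s * P n t) / (n:ℝ)^s := by
      simp only [hS]
      rw [Finset.sum_div]
      apply Finset.sum_congr rfl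
      intro t ht
      rw [div_pow]
      ring
    rw [hS'', hG', div_sub_div_same]
    rw [← Finset.sum_sub_distrib]
    rw [Finset.sum_congr rfl (fun t ht => by ring :
      ∀ t ∈ Finset.range (n-j+1),
        ((t:ℝ)+1)^s * P n t - (∏ i ∈ Finset.range s, ((t:ℝ)+1-α+i)) * P n t
        = (((t:ℝ)+1)^s - ∏ i ∈ Finset.range s, ((t:ℝ)+1-α+i)) * P n t)]
    rw [abs_div, abs_of_pos hns]
    have hbound : ∀ t ∈ Finset.range (n-j+1),
        |(((t:ℝ)+1)^s - ∏ i ∈ Finset.range s, ((t:ℝ)+1-α+i)) * P n t|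
        ≤ (((s:ℝ)+1) * ((s:ℝ) * ((n:ℝ)+1+s)^(s-1))) * P n t := by
      intro t ht
      have ht' : t ≤ n-j := Nat.lt_succ_iff.mp (Finset.mem_range.mp ht)
      have hp := hPpos n hn t ht'
      rw [abs_mul, abs_of_pos hp]
      apply mul_le_mul_of_nonneg_right _ hp.le
      apply term_bound α hα0 hα1 s t n
      have h3 : t + 1 ≤ n := by omega
      exact_mod_cast h3
    have hnum : |∑ t ∈ Finset.range (n-j+1),
        ((((t:ℝ)+1)^s - ∏ i ∈ Finset.range s, ((t:ℝ)+1-α+i)) * P n t)|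
        ≤ ((s:ℝ)+1) * ((s:ℝ) * ((n:ℝ)+1+s)^(s-1)) := by
      calc |∑ t ∈ Finset.range (n-j+1),
            ((((t:ℝ)+1)^s - ∏ i ∈ Finset.range s, ((t:ℝ)+1-α+i)) * P n t)|
          ≤ ∑ t ∈ Finset.range (n-j+1),
            |(((t:ℝ)+1)^s - ∏ i ∈ Finset.range s, ((t:ℝ)+1-α+i)) * P n t| :=
            Finset.abs_sum_le_sum_abs _ _
        _ ≤ ∑ t ∈ Finset.range (n-j+1),
            (((s:ℝ)+1) * ((s:ℝ) * ((n:ℝ)+1+s)^(s-1))) * P n t :=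
            Finset.sum_le_sum hbound
        _ = (((s:ℝ)+1) * ((s:ℝ) * ((n:ℝ)+1+s)^(s-1)))
              * ∑ t ∈ Finset.range (n-j+1), P n t := by rw [← Finset.mul_sum]
        _ = ((s:ℝ)+1) * ((s:ℝ) * ((n:ℝ)+1+s)^(s-1)) := by rw [hm0 n hn, mul_one]
    gcongr
  have hSmG0 : Tendsto (fun n => S n - G n) atTop (nhds 0) := by
    refine squeeze_zero_norm' ?_ (bound_tendsto s)
    filter_upwards [eventually_ge_atTop j] with n hn
    rw [Real.norm_eq_abs]
    exact hSG n hn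
  have hGlim : Tendsto G atTop (nhds (c/Dj)) := by
    have h1 : Tendsto (fun n : ℕ =>
        (c/Dj) * ∏ i ∈ Finset.range s, (((n:ℝ)+(α+(i:ℝ)))/(n:ℝ))) atTop (nhds ((c/Dj) * 1)) :=
      tendsto_const_nhds.mul (prod_ratio_tendsto α s)
    rw [mul_one] at h1
    apply h1.congr'
    filter_upwards [eventually_ge_atTop 1] with n hn
    have hnR : (0:ℝ) < (n:ℝ) := by exact_mod_cast hn
    simp only [hG]
    rw [Finset.prod_div_distrib, Finset.prod_const, Finset.card_range]
    rw [Finset.prod_congr rfl (fun i _ => by ring :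
      ∀ i ∈ Finset.range s, (n:ℝ)+(α+(i:ℝ)) = (n:ℝ)+α+(i:ℝ))]
    have hns : ((n:ℝ))^s ≠ 0 := by positivity
    field_simp
  have hSlim : Tendsto S atTop (nhds (c/Dj)) := by
    have h2 := hGlim.add hSmG0
    rw [add_zero] at h2
    apply h2.congr
    intro n
    ring
  have hXlim : Tendsto X atTop (nhds 0) := by
    refine squeeze_zero_norm'
      (a := fun n => |(j:ℝ)-3+2*α|
        * ∏ i ∈ Finset.range (n-j), (((i:ℝ)+1-α)/((i:ℝ)+1+α))) ?_ ?_
    · filter_upwards [eventually_ge_atTop j] with n hn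
      have hn1 : 1 ≤ n := le_trans hj hn
      have hnR : (0:ℝ) < (n:ℝ) := by exact_mod_cast hn1
      have hPn := hPpos n hn (n-j) le_rfl
      have hfrac0 : (0:ℝ) ≤ (((n-j:ℕ):ℝ)+1)/(n:ℝ) := by positivity
      have hfrac1 : (((n-j:ℕ):ℝ)+1)/(n:ℝ) ≤ 1 := by
        rw [div_le_one hnR]
        have h4 : (n-j) + 1 ≤ n := by omega
        exact_mod_cast h4
      have hQfac0 : ∀ i : ℕ, (0:ℝ) ≤ ((i:ℝ)+1-α)/((i:ℝ)+1+α) := by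
        intro i
        have hi0 : (0:ℝ) ≤ (i:ℝ) := Nat.cast_nonneg i
        apply div_nonneg <;> linarith
      have hPQ : P n (n-j) ≤ ∏ i ∈ Finset.range (n-j), (((i:ℝ)+1-α)/((i:ℝ)+1+α)) := by
        have hcast : ((n-j:ℕ):ℝ) = (n:ℝ)-(j:ℝ) := by rw [Nat.cast_sub hn]
        have hPval : P n (n-j)
            = ∏ i ∈ Finset.range (n-j), ((((n-j:ℕ):ℝ)-α-(i:ℝ))/((n:ℝ)-1+α-(i:ℝ))) := by
          simp only [hP, Nat.sub_self, gbinom_zero, mul_one]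
          unfold gbinom
          rw [div_div_div_cancel_right₀]
          · rw [← Finset.prod_div_distrib]
          · exact fact_ne (n-j)
        rw [hPval]
        rw [← Finset.prod_range_reflect
          (fun i => ((((n-j:ℕ):ℝ)-α-(i:ℝ))/((n:ℝ)-1+α-(i:ℝ)))) (n-j)]
        apply Finset.prod_le_prod
        · intro i hi
          have hi' : i < n-j := Finset.mem_range.mp hi
          have hcast2 : ((n-j-1-i:ℕ):ℝ) = ((n-j:ℕ):ℝ)-1-(i:ℝ) := by
            rw [Nat.cast_sub (by omega), Nat.cast_sub (by omega)]
            push_cast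
            ring
          rw [hcast2]
          apply div_nonneg
          · have hi2 : (i:ℝ)+1 ≤ ((n-j:ℕ):ℝ) := by exact_mod_cast hi'
            linarith
          · have hi2 : (i:ℝ)+1 ≤ ((n-j:ℕ):ℝ) := by exact_mod_cast hi'
            rw [hcast] at hi2 ⊢
            linarith
        · intro i hi
          have hi' : i < n-j := Finset.mem_range.mp hi
          have hcast2 : ((n-j-1-i:ℕ):ℝ) = ((n-j:ℕ):ℝ)-1-(i:ℝ) := by
            rw [Nat.cast_sub (by omega), Nat.cast_sub (by omega)]
            push_cast
            ring
          rw [hcast2]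
          have hi2 : (i:ℝ)+1 ≤ ((n-j:ℕ):ℝ) := by exact_mod_cast hi'
          have e7 : ((n-j:ℕ):ℝ)-α-(((n-j:ℕ):ℝ)-1-(i:ℝ)) = (i:ℝ)+1-α := by ring
          have e8 : (n:ℝ)-1+α-(((n-j:ℕ):ℝ)-1-(i:ℝ)) = (i:ℝ)+(j:ℝ)+α := by
            rw [hcast]; ring
          rw [e7, e8]
          have hi0 : (0:ℝ) ≤ (i:ℝ) := Nat.cast_nonneg i
          apply div_le_div_of_nonneg_left
          · linarith
          · linarith
          · linarith
      rw [Real.norm_eq_abs]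
      simp only [hX]
      rw [abs_mul, abs_mul, abs_of_nonneg (pow_nonneg hfrac0 s), abs_of_pos hPn]
      calc (((((n-j:ℕ):ℝ)+1)/(n:ℝ))^s) * P n (n-j) * |(j:ℝ)-3+2*α|
          ≤ 1 * (∏ i ∈ Finset.range (n-j), (((i:ℝ)+1-α)/((i:ℝ)+1+α))) * |(j:ℝ)-3+2*α| := by
            apply mul_le_mul_of_nonneg_right _ (abs_nonneg _)
            apply mul_le_mul (pow_le_one₀ hfrac0 hfrac1) hPQ hPn.le zero_le_one
        _ = |(j:ℝ)-3+2*α| * ∏ i ∈ Finset.range (n-j), (((i:ℝ)+1-α)/((i:ℝ)+1+α)) := by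
            ring
    · have hQ := (Q_tendsto k hk).comp (tendsto_sub_atTop_nat j)
      simp only [← hα] at hQ
      have h5 : Tendsto (fun n : ℕ => |(j:ℝ)-3+2*α|
          * ∏ i ∈ Finset.range (n-j), (((i:ℝ)+1-α)/((i:ℝ)+1+α)))
          atTop (nhds (|(j:ℝ)-3+2*α| * 0)) := tendsto_const_nhds.mul hQ
      rw [mul_zero] at h5
      exact h5
  have hSX := hSlim.add hXlim
  rw [add_zero] at hSX
  apply hSX.congr'
  filter_upwards [eventually_ge_atTop j] with n hn
  exact (hFeq n hn).symm
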